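/- Let X, X̃, Y, Ỹ be random variables, b > 0, 0 < u < 1, ℓ ∈ ℕ, and K(x,y) = 1_{|x−y| < b}. Then ‖[K(X,Y) − K(X̃,Ỹ)] · 1_{max(|X−X̃|, |Y−Ỹ|) < u^ℓ}‖₂ ≤ P(b − 2u^ℓ ≤ |X−Y| ≤ b)^{1/2} + P(b ≤ |X−Y| ≤ b + 2u^ℓ)^{1/2}. -/
import Mathlib


open MeasureTheory
open scoped ENNReal

theorem indicator_kernel_L2_bound {Ω : Type*} {mΩ : MeasurableSpace Ω}
    (μ : Measure Ω) [IsProbabilityMeasure μ]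
    (X X' Y Y' : Ω → ℝ) (b u : ℝ) (hb : 0 < b) (hu0 : 0 < u) (hu1 : u < 1)
    (ℓ : ℕ) (K : ℝ → ℝ → ℝ) (hK : ∀ x y, K x y = if |x - y| < b then 1 else 0) :
    eLpNorm
        (fun ω => if max |X ω - X' ω| |Y ω - Y' ω| < u ^ ℓ
          then K (X ω) (Y ω) - K (X' ω) (Y' ω) else 0) 2 μ
      ≤ (μ {ω | b - 2 * u ^ ℓ ≤ |X ω - Y ω| ∧ |X ω - Y ω| ≤ b}) ^ (1 / 2 : ℝ)
        + (μ {ω | b ≤ |X ω - Y ω| ∧ |X ω - Y ω| ≤ b + 2 * u ^ ℓ}) ^ (1 / 2 : ℝ) := by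
  set A := {ω | b - 2 * u ^ ℓ ≤ |X ω - Y ω| ∧ |X ω - Y ω| ≤ b} with hA
  set B := {ω | b ≤ |X ω - Y ω| ∧ |X ω - Y ω| ≤ b + 2 * u ^ ℓ} with hB
  have h2 : (2 : ℝ≥0∞) ≠ 0 := by norm_num
  have h2' : (2 : ℝ≥0∞) ≠ ⊤ := by norm_num
  rw [eLpNorm_eq_lintegral_rpow_enorm_toReal h2 h2']
  have key : (∫⁻ ω, (‖if max |X ω - X' ω| |Y ω - Y' ω| < u ^ ℓ
          then K (X ω) (Y ω) - K (X' ω) (Y' ω) else 0‖₊ : ℝ≥0∞) ^ (2 : ℝ≥0∞).toReal ∂μ)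
      ≤ μ A + μ B := by
    have hpt : ∀ ω, (‖if max |X ω - X' ω| |Y ω - Y' ω| < u ^ ℓ
          then K (X ω) (Y ω) - K (X' ω) (Y' ω) else 0‖₊ : ℝ≥0∞) ^ (2 : ℝ≥0∞).toReal
        ≤ (A ∪ B).indicator (fun _ => (1 : ℝ≥0∞)) ω := by
      intro ω
      by_cases hc : max |X ω - X' ω| |Y ω - Y' ω| < u ^ ℓ
      · have hd : |(|X ω - Y ω|) - (|X' ω - Y' ω|)| < 2 * u ^ ℓ := by
          have h1 : |X ω - X' ω| < u ^ ℓ := lt_of_le_of_lt (le_max_left _ _) hc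
          have h2 : |Y ω - Y' ω| < u ^ ℓ := lt_of_le_of_lt (le_max_right _ _) hc
          have h3 : |(|X ω - Y ω|) - (|X' ω - Y' ω|)| ≤ |(X ω - Y ω) - (X' ω - Y' ω)| :=
            abs_abs_sub_abs_le_abs_sub _ _
          have h4 : |(X ω - Y ω) - (X' ω - Y' ω)| ≤ |X ω - X' ω| + |Y ω - Y' ω| := by
            rw [show (X ω - Y ω) - (X' ω - Y' ω) = (X ω - X' ω) - (Y ω - Y' ω) by ring]
            exact abs_sub _ _
          linarith
        have habs := abs_lt.mp hd
        rw [if_pos hc, hK, hK]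
        by_cases hx : |X ω - Y ω| < b
        · by_cases hx' : |X' ω - Y' ω| < b
          · simp [hx, hx']
          · have hmem : ω ∈ A ∪ B := by
              left
              refine ⟨?_, hx.le⟩
              push_neg at hx'
              linarith [habs.1]
            rw [Set.indicator_of_mem hmem, if_pos hx, if_neg hx']
            simp
        · by_cases hx' : |X' ω - Y' ω| < b
          · have hmem : ω ∈ A ∪ B := by
              right
              push_neg at hx
              refine ⟨hx, ?_⟩
              linarith [habs.2]
            rw [Set.indicator_of_mem hmem, if_neg hx, if_pos hx']
            simp
          · simp [hx, hx']
      · rw [if_neg hc]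
        simp
    refine le_trans (lintegral_mono hpt) ?_
    refine le_trans (lintegral_indicator_const_le _ _) ?_
    rw [one_mul]
    exact measure_union_le _ _
  refine le_trans (ENNReal.rpow_le_rpow key (by positivity)) ?_
  have htr : (1 / (2 : ℝ≥0∞).toReal) = (1 / 2 : ℝ) := by norm_num
  rw [htr]
  exact ENNReal.rpow_add_le_add_rpow _ _ (by norm_num) (by norm_num)
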